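/- Let B and C be the central binomial and Catalan generating functions over ℚ (C is invertible since its constant term is 1). For every n ≥ 1, the coefficient of z^n in B·C − B·C⁻¹ equals ((3n+1)/(2n+2))·binom(2n,n); that is, the number of new type vertices over all right path* trees with n edges is ((3n+1)/(2n+2))·binom(2n,n). -/

import Mathlib

open PowerSeries Finset

/-- The central binomial generating function `B = ∑ binom(2n,n) zⁿ` over `ℚ`. -/
noncomputable def Bgf : PowerSeries ℚ := PowerSeries.mk fun n => ((2 * n).choose n : ℚ)

/-- The Catalan generating function `C = ∑ Cₙ zⁿ` over `ℚ`. -/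
noncomputable def Cgf : PowerSeries ℚ := PowerSeries.mk fun n => (catalan n : ℚ)

lemma cast_choose_eq (n : ℕ) : ((2 * n).choose n : ℚ) = ((n : ℚ) + 1) * catalan n := by
  have h := succ_mul_catalan_eq_centralBinom n
  have h2 : Nat.centralBinom n = (2 * n).choose n := rfl
  rw [h2] at h
  exact_mod_cast h.symm

lemma catalan_rec (n : ℕ) :
    ((n : ℚ) + 2) * catalan (n + 1) = 2 * (2 * n + 1) * catalan n := by
  have h1 := succ_mul_catalan_eq_centralBinom (n + 1)
  have h2 := Nat.succ_mul_centralBinom_succ n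
  have h3 := succ_mul_catalan_eq_centralBinom n
  have hq1 : ((n : ℚ) + 1 + 1) * catalan (n + 1) = Nat.centralBinom (n + 1) := by
    exact_mod_cast h1
  have hq2 : ((n : ℚ) + 1) * Nat.centralBinom (n + 1)
      = 2 * (2 * n + 1) * Nat.centralBinom n := by exact_mod_cast h2
  have hq3 : ((n : ℚ) + 1) * catalan n = Nat.centralBinom n := by exact_mod_cast h3
  have hne : (n : ℚ) + 1 ≠ 0 := by positivity
  have key : ((n : ℚ) + 1) * (((n : ℚ) + 2) * catalan (n + 1))
      = ((n : ℚ) + 1) * (2 * (2 * n + 1) * catalan n) := by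
    calc ((n : ℚ) + 1) * (((n : ℚ) + 2) * catalan (n + 1))
        = ((n : ℚ) + 1) * (Nat.centralBinom (n + 1) : ℚ) := by
          rw [← hq1]; ring
      _ = 2 * (2 * n + 1) * Nat.centralBinom n := hq2
      _ = ((n : ℚ) + 1) * (2 * (2 * n + 1) * catalan n) := by
          rw [← hq3]; ring
  exact mul_left_cancel₀ hne key

lemma conv_sum (n : ℕ) :
    ∑ p ∈ antidiagonal n, (catalan p.1 : ℚ) * (((p.2 : ℚ) + 1) * catalan p.2)
      = (2 * (n : ℚ) + 1) * catalan n := by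
  set S := ∑ p ∈ antidiagonal n, (catalan p.1 : ℚ) * (((p.2 : ℚ) + 1) * catalan p.2) with hS
  have hswap : S = ∑ p ∈ antidiagonal n, (catalan p.2 : ℚ) * (((p.1 : ℚ) + 1) * catalan p.1) := by
    rw [hS]
    exact (Finset.Nat.sum_antidiagonal_swap
      (f := fun p => (catalan p.1 : ℚ) * (((p.2 : ℚ) + 1) * catalan p.2))).symm
  have hsum : S + S = ((n : ℚ) + 2) * catalan (n + 1) := by
    nth_rewrite 2 [hswap]
    rw [hS, ← Finset.sum_add_distrib]
    have hcongr : ∀ p ∈ antidiagonal n,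
        (catalan p.1 : ℚ) * (((p.2 : ℚ) + 1) * catalan p.2)
          + (catalan p.2 : ℚ) * (((p.1 : ℚ) + 1) * catalan p.1)
        = ((n : ℚ) + 2) * ((catalan p.1 : ℚ) * catalan p.2) := by
      intro p hp
      have hp' : p.1 + p.2 = n := Finset.HasAntidiagonal.mem_antidiagonal.mp hp
      have hq : (p.1 : ℚ) + p.2 = n := by exact_mod_cast hp'
      linear_combination ((catalan p.1 : ℚ) * catalan p.2) * hq
    rw [Finset.sum_congr rfl hcongr, ← Finset.mul_sum]
    congr 1
    have h := catalan_succ' n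
    have h' : ((catalan (n + 1) : ℚ)) = ∑ p ∈ antidiagonal n, (catalan p.1 : ℚ) * catalan p.2 := by
      rw [h]; push_cast; rfl
    rw [← h']
  have hrec := catalan_rec n
  linarith [hsum, hrec]

lemma key_eq : Cgf * Bgf + Cgf = 2 * Bgf := by
  have h2 : (2 : PowerSeries ℚ) * Bgf = Bgf + Bgf := by ring
  rw [h2]
  ext n
  rw [map_add, map_add, coeff_mul]
  simp only [Bgf, Cgf, coeff_mk]
  have hc : ∑ p ∈ antidiagonal n, (catalan p.1 : ℚ) * ((2 * p.2).choose p.2 : ℚ)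
      = ∑ p ∈ antidiagonal n, (catalan p.1 : ℚ) * (((p.2 : ℚ) + 1) * catalan p.2) := by
    refine Finset.sum_congr rfl fun p _ => ?_
    rw [cast_choose_eq]
  rw [hc, conv_sum, cast_choose_eq]
  ring

/-- For `n ≥ 1`, the number of new type vertices over all right path* trees with `n`
edges is `[zⁿ](BC − B/C) = ((3n+1)/(2n+2))·binom(2n,n)`. -/
theorem stmt17 (n : ℕ) (hn : 1 ≤ n) :
    PowerSeries.coeff n (Bgf * Cgf - Bgf * Cgf⁻¹) =
      (3 * (n : ℚ) + 1) / (2 * (n : ℚ) + 2) * ((2 * n).choose n : ℚ) := by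
  have hC0 : constantCoeff Cgf ≠ 0 := by
    rw [Cgf, ← coeff_zero_eq_constantCoeff, coeff_mk]
    norm_num
  have hCinv : Cgf * Cgf⁻¹ = 1 := PowerSeries.mul_inv_cancel _ hC0
  have h1 : Bgf * Cgf = 2 * Bgf - Cgf := by
    linear_combination key_eq
  have h2 : Bgf * Cgf⁻¹ + Bgf * Cgf⁻¹ = Bgf + 1 := by
    calc Bgf * Cgf⁻¹ + Bgf * Cgf⁻¹ = (Cgf * Bgf + Cgf) * Cgf⁻¹ := by
          rw [key_eq]; ring
      _ = Bgf * (Cgf * Cgf⁻¹) + Cgf * Cgf⁻¹ := by ring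
      _ = Bgf + 1 := by rw [hCinv]; ring
  have hn0 : n ≠ 0 := by omega
  have e1 : PowerSeries.coeff n (Bgf * Cgf)
      = 2 * ((2 * n).choose n : ℚ) - catalan n := by
    rw [h1, show (2 : PowerSeries ℚ) * Bgf - Cgf = Bgf + Bgf - Cgf by ring,
      map_sub, map_add]
    simp only [Bgf, Cgf, coeff_mk]
    ring
  have e2 : PowerSeries.coeff n (Bgf * Cgf⁻¹)
      = ((2 * n).choose n : ℚ) / 2 := by
    have := congrArg (PowerSeries.coeff n) h2
    rw [map_add, map_add, coeff_one, if_neg hn0] at this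
    simp only [Bgf, coeff_mk] at this ⊢
    linarith
  rw [map_sub, e1, e2, cast_choose_eq]
  have hne : (n : ℚ) + 1 ≠ 0 := by positivity
  field_simp
  ring
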